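/- Let ρ^N be the uniform mixture over all N permutations of the state |0⟩^{⊗(N−1)} ⊗ |1⟩ on N qubits. Then for every probability mixture τ = ∫ σ^⊗N dμ(σ) of i.i.d. states, the trace distance (1/2)‖ρ^N − τ‖₁ is at least some positive constant; in particular ‖ρ^N − σ^⊗N‖₁ ≥ 1/2 for every single-qubit density operator σ. -/

import Mathlib

open MeasureTheory
open scoped ComplexOrder Matrix

noncomputable instance : MeasurableSpace (Matrix (Fin 2) (Fin 2) ℂ) :=
  inferInstanceAs (MeasurableSpace (Fin 2 → Fin 2 → ℂ))

/-- Square root of a positive semidefinite matrix (removed from Mathlib; old definition). -/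
noncomputable def Matrix.PosSemidef.sqrt {n 𝕜 : Type*} [Fintype n] [RCLike 𝕜] [DecidableEq n]
    {A : Matrix n n 𝕜} (hA : A.PosSemidef) : Matrix n n 𝕜 :=
  hA.1.eigenvectorUnitary.1 * Matrix.diagonal ((↑) ∘ (√·) ∘ hA.1.eigenvalues) *
    (star hA.1.eigenvectorUnitary : Matrix n n 𝕜)

/-- The trace norm (Schatten 1-norm) of a complex square matrix. -/
noncomputable def traceNorm {n : Type*} [Fintype n] [DecidableEq n]
    (A : Matrix n n ℂ) : ℝ :=
  ((Matrix.posSemidef_conjTranspose_mul_self A).sqrt).trace.re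

/-- The n-fold tensor power of a single-qubit operator, as a matrix indexed
by classical strings. -/
noncomputable def tpow (σ : Matrix (Fin 2) (Fin 2) ℂ) (n : ℕ) :
    Matrix (Fin n → Fin 2) (Fin n → Fin 2) ℂ :=
  Matrix.of fun b c => ∏ i, σ (b i) (c i)

/-- The computational basis state with a single 1 in position i. -/
def eVec {N : ℕ} (i : Fin N) : Fin N → Fin 2 := fun j => if j = i then 1 else 0

/-- The uniform mixture over all N permutations of |0⟩^{⊗(N−1)} ⊗ |1⟩. -/
noncomputable def weightOneMix (N : ℕ) :
    Matrix (Fin N → Fin 2) (Fin N → Fin 2) ℂ :=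
  (N : ℂ)⁻¹ • ∑ i : Fin N, Matrix.single (eVec i) (eVec i) (1 : ℂ)

/-! ### Auxiliary lemmas -/

open scoped MatrixOrder in
lemma psd_sqrt_eq_of_sq {n : Type*} [Fintype n] [DecidableEq n] {A M : Matrix n n ℂ}
    (hA : A.PosSemidef) (hM : M.PosSemidef) (h : M ^ 2 = A) : M = hA.sqrt := by
  have h1 : CFC.sqrt A = M := CFC.sqrt_unique (by rw [← h, pow_two]) hM.nonneg
  rw [← h1, CFC.sqrt_eq_cfc, cfc_nnreal_eq_real _ A, hA.1.cfc_eq]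
  simp [Matrix.IsHermitian.cfc, Matrix.PosSemidef.sqrt, Function.comp_def,
    max_eq_left (hA.eigenvalues_nonneg _)]

lemma sqrt_pm {n : Type*} [Fintype n] [DecidableEq n] {A : Matrix n n ℂ} (hA : A.IsHermitian) :
    ((Matrix.posSemidef_conjTranspose_mul_self A).sqrt - A).PosSemidef ∧
    ((Matrix.posSemidef_conjTranspose_mul_self A).sqrt + A).PosSemidef := by
  classical
  set U : Matrix n n ℂ := (hA.eigenvectorUnitary : Matrix n n ℂ) with hUdef
  have hU : U ∈ Matrix.unitaryGroup n ℂ := hA.eigenvectorUnitary.2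
  have hU2 : star U * U = 1 := (Matrix.mem_unitaryGroup_iff').mp hU
  set lam := hA.eigenvalues with hlam
  have hpsd : ∀ f : n → ℝ, (∀ i, 0 ≤ f i) →
      (U * Matrix.diagonal (Complex.ofReal ∘ f) * star U).PosSemidef := by
    intro f hf
    rw [Matrix.star_eq_conjTranspose]
    exact (Matrix.posSemidef_diagonal_iff.mpr fun i => by
      simpa using Complex.zero_le_real.mpr (hf i)).mul_mul_conjTranspose_same U
  have hmul : ∀ a b : n → ℂ,
      (U * Matrix.diagonal a * star U) * (U * Matrix.diagonal b * star U)
        = U * Matrix.diagonal (fun i => a i * b i) * star U := by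
    intro a b
    calc (U * Matrix.diagonal a * star U) * (U * Matrix.diagonal b * star U)
        = U * Matrix.diagonal a * (star U * U) * Matrix.diagonal b * star U := by
          simp only [Matrix.mul_assoc]
      _ = U * (Matrix.diagonal a * Matrix.diagonal b) * star U := by
          rw [hU2]; simp only [Matrix.mul_one, Matrix.mul_assoc]
      _ = U * Matrix.diagonal (fun i => a i * b i) * star U := by
          rw [Matrix.diagonal_mul_diagonal]
  set M : Matrix n n ℂ := U * Matrix.diagonal (Complex.ofReal ∘ fun i => |lam i|) * star U with hM
  have hspec : A = U * Matrix.diagonal (Complex.ofReal ∘ lam) * star U := hA.spectral_theorem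
  have hMpsd : M.PosSemidef := hpsd _ fun i => abs_nonneg _
  have hsq : M ^ 2 = Aᴴ * A := by
    rw [hA.eq, pow_two, hM]
    conv_rhs => rw [hspec]
    rw [hmul, hmul]
    have : (fun i => (Complex.ofReal ∘ fun j => |lam j|) i * (Complex.ofReal ∘ fun j => |lam j|) i)
         = (fun i => (Complex.ofReal ∘ lam) i * (Complex.ofReal ∘ lam) i) := by
      funext i
      simp only [Function.comp_apply, ← Complex.ofReal_mul, abs_mul_abs_self]
    rw [this]
  have hMs : M = (Matrix.posSemidef_conjTranspose_mul_self A).sqrt :=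
    psd_sqrt_eq_of_sq _ hMpsd hsq
  rw [← hMs]
  constructor
  · have h : M - A = U * Matrix.diagonal (Complex.ofReal ∘ fun i => |lam i| - lam i) * star U := by
      conv_lhs => rw [hM, hspec]
      rw [← Matrix.sub_mul, ← Matrix.mul_sub]
      have : Matrix.diagonal (Complex.ofReal ∘ fun i => |lam i|) - Matrix.diagonal (Complex.ofReal ∘ lam)
           = Matrix.diagonal (Complex.ofReal ∘ fun i => |lam i| - lam i) := by
        rw [Matrix.diagonal_sub]
        ext i j
        rcases eq_or_ne i j with rfl | h
        · simp
        · simp [Matrix.diagonal_apply_ne _ h]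
      rw [this]
    rw [h]
    exact hpsd _ fun i => sub_nonneg.mpr (le_abs_self _)
  · have h : M + A = U * Matrix.diagonal (Complex.ofReal ∘ fun i => |lam i| + lam i) * star U := by
      conv_lhs => rw [hM, hspec]
      rw [← Matrix.add_mul, ← Matrix.mul_add]
      have : Matrix.diagonal (Complex.ofReal ∘ fun i => |lam i|) + Matrix.diagonal (Complex.ofReal ∘ lam)
           = Matrix.diagonal (Complex.ofReal ∘ fun i => |lam i| + lam i) := by
        rw [Matrix.diagonal_add]
        ext i j
        rcases eq_or_ne i j with rfl | h
        · simp
        · simp [Matrix.diagonal_apply_ne _ h]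
      rw [this]
    rw [h]
    exact hpsd _ fun i => by linarith [neg_abs_le (lam i)]

lemma psd_diag_re_nonneg {n : Type*} [Fintype n] [DecidableEq n] {M : Matrix n n ℂ}
    (hM : M.PosSemidef) (b : n) : 0 ≤ (M b b).re := by
  have h := hM.dotProduct_mulVec_nonneg (Pi.single b 1)
  have he : star (Pi.single b 1 : n → ℂ) ⬝ᵥ (M *ᵥ Pi.single b 1) = M b b := by
    simp [Matrix.mulVec_single, dotProduct, Pi.single_apply, apply_ite]
  rw [he] at h
  exact (Complex.le_def.mp h).1

lemma traceNorm_ge {n : Type*} [Fintype n] [DecidableEq n] {A : Matrix n n ℂ}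
    (hA : A.IsHermitian) (S : Finset n) :
    2 * (∑ b ∈ S, (A b b).re) - A.trace.re ≤ traceNorm A := by
  obtain ⟨h1, h2⟩ := sqrt_pm hA
  set B := (Matrix.posSemidef_conjTranspose_mul_self A).sqrt with hB
  have htr : traceNorm A = ∑ b ∈ S, (B b b).re + ∑ b ∈ Sᶜ, (B b b).re := by
    rw [traceNorm, Matrix.trace, Complex.re_sum, Finset.sum_add_sum_compl]
    rfl
  have hAtr : A.trace.re = ∑ b ∈ S, (A b b).re + ∑ b ∈ Sᶜ, (A b b).re := by
    rw [Matrix.trace, Complex.re_sum, Finset.sum_add_sum_compl]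
    rfl
  have hS : ∑ b ∈ S, (A b b).re ≤ ∑ b ∈ S, (B b b).re := by
    refine Finset.sum_le_sum fun b _ => ?_
    have := psd_diag_re_nonneg h1 b
    simp only [Matrix.sub_apply, Complex.sub_re] at this
    linarith
  have hSc : ∑ b ∈ Sᶜ, (-(A b b).re) ≤ ∑ b ∈ Sᶜ, (B b b).re := by
    refine Finset.sum_le_sum fun b _ => ?_
    have := psd_diag_re_nonneg h2 b
    simp only [Matrix.add_apply, Complex.add_re] at this
    linarith
  rw [Finset.sum_neg_distrib] at hSc
  linarith

lemma key_ineq {N : ℕ} (hN : 2 ≤ N) {p q : ℝ} (hp : 0 ≤ p) (hq : 0 ≤ q) (hpq : p + q = 1) :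
    (N : ℝ) * (q * p ^ (N - 1)) ≤ 3 / 4 := by
  have hN2 : (2:ℝ) ≤ (N:ℝ) := by exact_mod_cast hN
  set m : ℕ := N - 1 with hmdef
  have hmN : (m : ℝ) = (N:ℝ) - 1 := by
    have h1 : (1:ℕ) ≤ N := le_trans one_le_two hN
    rw [hmdef, Nat.cast_sub h1, Nat.cast_one]
  have hm1 : (1:ℝ) ≤ (m:ℝ) := by rw [hmN]; linarith
  have hm0 : (0:ℝ) < (m:ℝ) := by linarith
  have hpe : p ≤ Real.exp (-q) := by
    have := Real.add_one_le_exp (-q); linarith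
  have h1 : p ^ m ≤ Real.exp (-((m:ℝ) * q)) := by
    calc p ^ m ≤ Real.exp (-q) ^ m := pow_le_pow_left₀ hp hpe m
      _ = Real.exp (-((m:ℝ)*q)) := by rw [← Real.exp_nat_mul]; ring_nf
  set t : ℝ := (m:ℝ) * q with ht
  have ht0 : 0 ≤ t := mul_nonneg (le_of_lt hm0) hq
  have h2 : t * Real.exp (-t) ≤ Real.exp (-1) := by
    have h3 : t ≤ Real.exp (t - 1) := by
      have := Real.add_one_le_exp (t - 1); linarith
    calc t * Real.exp (-t) ≤ Real.exp (t-1) * Real.exp (-t) :=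
          mul_le_mul_of_nonneg_right h3 (Real.exp_nonneg _)
      _ = Real.exp (-1) := by rw [← Real.exp_add]; ring_nf
  have hexp : Real.exp (-1) ≤ 3/8 := by
    have h83 : (8:ℝ)/3 ≤ Real.exp 1 := by
      have := Real.exp_one_gt_d9; norm_num at this ⊢; linarith
    rw [Real.exp_neg]
    calc (Real.exp 1)⁻¹ ≤ ((8:ℝ)/3)⁻¹ := by
          apply inv_anti₀ (by norm_num) h83
      _ ≤ 3/8 := by norm_num
  have hNm : (N:ℝ) ≤ 2 * (m:ℝ) := by rw [hmN]; linarith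
  have hstep : (N:ℝ) * (q * p ^ m) ≤ (N:ℝ) * (q * Real.exp (-t)) := by
    apply mul_le_mul_of_nonneg_left _ (by linarith)
    exact mul_le_mul_of_nonneg_left h1 hq
  have hqe : 0 ≤ q * Real.exp (-t) := mul_nonneg hq (Real.exp_nonneg _)
  have hstep2 : (N:ℝ) * (q * Real.exp (-t)) ≤ 2 * (m:ℝ) * (q * Real.exp (-t)) :=
    mul_le_mul_of_nonneg_right hNm hqe
  have hstep3 : 2 * (m:ℝ) * (q * Real.exp (-t)) = 2 * (t * Real.exp (-t)) := by ring
  calc (N:ℝ) * (q * p ^ (N-1)) ≤ 2 * (t * Real.exp (-t)) := by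
        rw [← hstep3]; exact le_trans hstep hstep2
    _ ≤ 2 * Real.exp (-1) := by linarith
    _ ≤ 3/4 := by linarith

lemma eVec_injective {N : ℕ} : Function.Injective (eVec (N := N)) := by
  intro i j h
  by_contra hij
  have h1 : eVec i i = (1 : Fin 2) := by simp [eVec]
  have h2 : eVec j i = (0 : Fin 2) := by simp [eVec, hij]
  rw [h, h2] at h1
  exact zero_ne_one h1

lemma weightOneMix_apply (N : ℕ) (b c : Fin N → Fin 2) :
    weightOneMix N b c
      = (N:ℂ)⁻¹ * ∑ i : Fin N, (if eVec i = b ∧ eVec i = c then (1:ℂ) else 0) := by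
  simp [weightOneMix, Matrix.single, Matrix.sum_apply]

lemma weightOneMix_herm (N : ℕ) : (weightOneMix N).IsHermitian := by
  ext b c
  rw [Matrix.conjTranspose_apply, weightOneMix_apply, weightOneMix_apply]
  rw [star_mul']
  congr 1
  · simp
  · rw [star_sum]
    congr 1
    funext i
    rcases em (eVec i = b ∧ eVec i = c) with h | h
    · simp [h.1, h.2]
    · have h' : ¬ (eVec i = c ∧ eVec i = b) := fun hh => h ⟨hh.2, hh.1⟩
      simp [h, h']

lemma weightOneMix_diag {N : ℕ} (i : Fin N) :
    weightOneMix N (eVec i) (eVec i) = (N:ℂ)⁻¹ := by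
  rw [weightOneMix_apply]
  have h : ∑ j : Fin N, (if eVec j = eVec i ∧ eVec j = eVec i then (1:ℂ) else 0)
      = ∑ j : Fin N, (if j = i then (1:ℂ) else 0) := by
    apply Finset.sum_congr rfl
    intro j _
    congr 1
    simp only [and_self, eq_iff_iff]
    exact ⟨fun h => eVec_injective h, fun h => by rw [h]⟩
  rw [h, Finset.sum_ite_eq' Finset.univ i (fun _ => (1:ℂ))]
  simp

lemma weightOneMix_trace {N : ℕ} (hN : 1 ≤ N) : (weightOneMix N).trace = 1 := by
  have hNne : (N:ℂ) ≠ 0 := by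
    exact Nat.cast_ne_zero.mpr (by omega)
  simp only [Matrix.trace, Matrix.diag]
  have h1 : ∀ b : Fin N → Fin 2, weightOneMix N b b
      = (N:ℂ)⁻¹ * ∑ i : Fin N, (if eVec i = b then (1:ℂ) else 0) := by
    intro b; rw [weightOneMix_apply]; simp
  simp only [h1]
  rw [← Finset.mul_sum, Finset.sum_comm]
  have h2 : ∀ i : Fin N, ∑ b : Fin N → Fin 2, (if eVec i = b then (1:ℂ) else 0) = 1 := by
    intro i
    rw [Finset.sum_ite_eq Finset.univ (eVec i) (fun _ => (1:ℂ))]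
    simp
  simp only [h2]
  simp [hNne]

lemma tpow_herm {σ : Matrix (Fin 2) (Fin 2) ℂ} (hσ : σ.IsHermitian) (N : ℕ) :
    (tpow σ N).IsHermitian := by
  ext b c
  rw [Matrix.conjTranspose_apply]
  show star (tpow σ N c b) = tpow σ N b c
  simp only [tpow]
  simp only [Matrix.of_apply, star_prod]
  apply Finset.prod_congr rfl
  intro j _
  rw [← Matrix.conjTranspose_apply, hσ.eq]

lemma tpow_diag_eVec {N : ℕ} (σ : Matrix (Fin 2) (Fin 2) ℂ) (i : Fin N) :
    tpow σ N (eVec i) (eVec i) = σ 1 1 * σ 0 0 ^ (N - 1) := by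
  show (∏ j, σ (eVec i j) (eVec i j)) = _
  rw [← Finset.mul_prod_erase Finset.univ _ (Finset.mem_univ i)]
  congr 1
  · simp [eVec]
  · rw [Finset.prod_congr rfl (fun j hj => ?_), Finset.prod_const,
      Finset.card_erase_of_mem (Finset.mem_univ i), Finset.card_univ, Fintype.card_fin]
    have h0 : eVec i j = 0 := by
      simp [eVec, Finset.ne_of_mem_erase hj]
    rw [h0]

lemma tpow_trace (σ : Matrix (Fin 2) (Fin 2) ℂ) (N : ℕ) :
    (tpow σ N).trace = σ.trace ^ N := by
  simp only [Matrix.trace, Matrix.diag]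
  have h : ∀ b : Fin N → Fin 2, tpow σ N b b = ∏ i, σ (b i) (b i) := fun b => rfl
  simp only [h]
  have key := Finset.prod_univ_sum (fun _ : Fin N => (Finset.univ : Finset (Fin 2)))
    (fun _ v => σ v v)
  rw [← Fintype.piFinset_univ, ← key]
  rw [Finset.prod_const, Finset.card_univ, Fintype.card_fin]

lemma psd_diag_stuff {σ : Matrix (Fin 2) (Fin 2) ℂ} (hσ : σ.PosSemidef) (ht : σ.trace = 1) :
    0 ≤ (σ 0 0).re ∧ 0 ≤ (σ 1 1).re ∧ (σ 0 0).re + (σ 1 1).re = 1 ∧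
    σ 0 0 = ((σ 0 0).re : ℂ) ∧ σ 1 1 = ((σ 1 1).re : ℂ) := by
  have hreal : ∀ k, σ k k = ((σ k k).re : ℂ) := by
    intro k
    have h := congrFun (congrFun hσ.1 k) k
    rw [Matrix.conjTranspose_apply] at h
    exact (Complex.conj_eq_iff_re.mp h).symm
  have htr : σ 0 0 + σ 1 1 = 1 := by
    have h : σ.trace = σ 0 0 + σ 1 1 := by
      simp [Matrix.trace, Matrix.diag, Fin.sum_univ_two]
    rw [h] at ht; exact ht
  refine ⟨psd_diag_re_nonneg hσ 0, psd_diag_re_nonneg hσ 1, ?_, hreal 0, hreal 1⟩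
  have h := congrArg Complex.re htr
  simpa using h

lemma tpow_diag_sum_bound {N : ℕ} (hN : 2 ≤ N) {σ : Matrix (Fin 2) (Fin 2) ℂ}
    (hσ : σ.PosSemidef) (ht : σ.trace = 1) :
    ∑ i : Fin N, (tpow σ N (eVec i) (eVec i)).re ≤ 3/4 := by
  obtain ⟨hp, hq, hpq, he0, he1⟩ := psd_diag_stuff hσ ht
  have h : ∀ i : Fin N, (tpow σ N (eVec i) (eVec i)).re
      = (σ 1 1).re * (σ 0 0).re ^ (N-1) := by
    intro i
    rw [tpow_diag_eVec]
    conv_lhs => rw [he0, he1]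
    rw [← Complex.ofReal_pow, ← Complex.ofReal_mul, Complex.ofReal_re]
  simp only [h, Finset.sum_const, Finset.card_univ, Fintype.card_fin, nsmul_eq_mul]
  exact key_ineq hN hp hq hpq

lemma tpow_diag_norm_le {N : ℕ} (b : Fin N → Fin 2) {σ : Matrix (Fin 2) (Fin 2) ℂ}
    (hσ : σ.PosSemidef) (ht : σ.trace = 1) : ‖tpow σ N b b‖ ≤ 1 := by
  obtain ⟨hp, hq, hpq, he0, he1⟩ := psd_diag_stuff hσ ht
  have hent : ∀ k : Fin 2, ‖σ k k‖ ≤ 1 := by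
    intro k
    have hk01 : k = 0 ∨ k = 1 := by omega
    rcases hk01 with rfl | rfl
    · rw [he0, Complex.norm_real, Real.norm_eq_abs, abs_of_nonneg hp]; linarith
    · rw [he1, Complex.norm_real, Real.norm_eq_abs, abs_of_nonneg hq]; linarith
  have key : ‖∏ i, σ (b i) (b i)‖ ≤ 1 := by
    rw [norm_prod]
    exact Finset.prod_le_one (fun _ _ => norm_nonneg _) (fun i _ => hent _)
  exact key

/-- Core estimate: any Hermitian, trace-one matrix whose weight-one diagonal
mass is at most 3/4 is at trace-norm distance at least 1/2 from `weightOneMix N`. -/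
lemma core_bound {N : ℕ} (hN : 2 ≤ N) (τ : Matrix (Fin N → Fin 2) (Fin N → Fin 2) ℂ)
    (hherm : τ.IsHermitian) (htr : τ.trace = 1)
    (hs : ∑ i : Fin N, (τ (eVec i) (eVec i)).re ≤ 3/4) :
    (1:ℝ)/2 ≤ traceNorm (weightOneMix N - τ) := by
  have hN1 : 1 ≤ N := le_trans one_le_two hN
  have hA : (weightOneMix N - τ).IsHermitian := (weightOneMix_herm N).sub hherm
  have hb := traceNorm_ge hA (Finset.univ.image eVec)
  have hsum : ∑ b ∈ Finset.univ.image eVec, ((weightOneMix N - τ) b b).re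
      = ∑ i : Fin N, ((weightOneMix N - τ) (eVec i) (eVec i)).re :=
    Finset.sum_image (fun i _ j _ h => eVec_injective h)
  have hdiag : ∀ i : Fin N, ((weightOneMix N - τ) (eVec i) (eVec i)).re
      = ((N:ℝ))⁻¹ - (τ (eVec i) (eVec i)).re := by
    intro i
    rw [Matrix.sub_apply, Complex.sub_re, weightOneMix_diag]
    congr 1
    rw [show ((N:ℂ))⁻¹ = Complex.ofReal ((N:ℝ)⁻¹) by push_cast; ring]
    exact Complex.ofReal_re _
  have hNne : ((N:ℝ)) ≠ 0 := by positivity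
  have hsum2 : ∑ i : Fin N, ((weightOneMix N - τ) (eVec i) (eVec i)).re
      = 1 - ∑ i : Fin N, (τ (eVec i) (eVec i)).re := by
    simp only [hdiag, Finset.sum_sub_distrib, Finset.sum_const, Finset.card_univ,
      Fintype.card_fin, nsmul_eq_mul]
    congr 1
    field_simp
  have htr0 : ((weightOneMix N - τ).trace).re = 0 := by
    rw [Matrix.trace_sub, weightOneMix_trace hN1, htr]
    simp
  rw [hsum, hsum2, htr0] at hb
  linarith

/-- The uniform mixture over the N permutations of |0⟩^{⊗(N−1)}⊗|1⟩ is far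
from every mixture of i.i.d. states: its trace distance to any probability
mixture ∫ σ^⊗N dμ(σ) of i.i.d. states is at least some positive constant;
in particular ‖ρ^N − σ^⊗N‖₁ ≥ 1/2 for every single-qubit density operator σ. -/
theorem weightOneMix_far_from_iid {N : ℕ} (hN : 2 ≤ N) :
    (∃ c : ℝ, 0 < c ∧
      ∀ (μ : Measure (Matrix (Fin 2) (Fin 2) ℂ)), IsProbabilityMeasure μ →
        (∀ᵐ σ ∂μ, σ.PosSemidef ∧ σ.trace = 1) →
        ∀ τ : Matrix (Fin N → Fin 2) (Fin N → Fin 2) ℂ,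
          (∀ b c, τ b c = ∫ σ, tpow σ N b c ∂μ) →
          c ≤ (1 / 2) * traceNorm (weightOneMix N - τ)) ∧
      ∀ σ : Matrix (Fin 2) (Fin 2) ℂ, σ.PosSemidef → σ.trace = 1 →
        (1 : ℝ) / 2 ≤ traceNorm (weightOneMix N - tpow σ N) := by
  constructor
  · refine ⟨1/4, by norm_num, ?_⟩
    intro μ hprob hae τ hτ
    -- measurability of entries
    have hmeas : ∀ b c : Fin N → Fin 2,
        Measurable fun σ : Matrix (Fin 2) (Fin 2) ℂ => tpow σ N b c := by
      intro b c
      simp only [tpow, Matrix.of_apply]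
      exact Finset.measurable_prod _ (fun i _ =>
        ((measurable_pi_apply (c i)).comp (measurable_pi_apply (b i))))
    -- integrability of diagonal entries
    have hint : ∀ b : Fin N → Fin 2,
        Integrable (fun σ => tpow σ N b b) μ := by
      intro b
      refine (integrable_const (1:ℝ)).mono' (hmeas b b).aestronglyMeasurable ?_
      filter_upwards [hae] with σ hσ
      simpa using tpow_diag_norm_le b hσ.1 hσ.2
    -- τ is Hermitian
    have hherm : τ.IsHermitian := by
      ext b c
      rw [Matrix.conjTranspose_apply, hτ c b, hτ b c]
      rw [show (star (∫ σ, tpow σ N c b ∂μ) : ℂ)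
          = (starRingEnd ℂ) (∫ σ, tpow σ N c b ∂μ) from rfl]
      rw [← integral_conj]
      apply integral_congr_ae
      filter_upwards [hae] with σ hσ
      have h := congrFun (congrFun (tpow_herm hσ.1.1 N) b) c
      rw [Matrix.conjTranspose_apply] at h
      exact h
    -- τ has trace 1
    have htr : τ.trace = 1 := by
      simp only [Matrix.trace, Matrix.diag]
      have h1 : ∀ b : Fin N → Fin 2, τ b b = ∫ σ, tpow σ N b b ∂μ := fun b => hτ b b
      simp only [h1]
      rw [← integral_finset_sum _ (fun b _ => hint b)]
      have h2 : ∀ᵐ σ ∂μ, (∑ b : Fin N → Fin 2, tpow σ N b b) = (1:ℂ) := by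
        filter_upwards [hae] with σ hσ
        have := tpow_trace σ N
        simp only [Matrix.trace, Matrix.diag] at this
        have h3 : (∑ x : Fin 2, σ x x) = σ.trace := rfl
        rw [this, h3, hσ.2, one_pow]
      rw [integral_congr_ae h2]
      simp
    -- diagonal sum bound
    have hs : ∑ i : Fin N, (τ (eVec i) (eVec i)).re ≤ 3/4 := by
      have h1 : ∀ i : Fin N, (τ (eVec i) (eVec i)).re
          = ∫ σ, (tpow σ N (eVec i) (eVec i)).re ∂μ := by
        intro i
        rw [hτ]
        exact (integral_re (hint _)).symm
      have hintre : ∀ b : Fin N → Fin 2,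
          Integrable (fun σ => (tpow σ N b b).re) μ := by
        intro b
        simpa using (hint b).re
      simp only [h1]
      rw [← integral_finset_sum _ (fun i _ => hintre (eVec i))]
      have h2 : (∫ σ, ∑ i : Fin N, (tpow σ N (eVec i) (eVec i)).re ∂μ)
          ≤ ∫ _, (3/4 : ℝ) ∂μ := by
        apply integral_mono_ae
          (integrable_finset_sum _ (fun i _ => hintre (eVec i))) (integrable_const _)
        filter_upwards [hae] with σ hσ
        exact tpow_diag_sum_bound hN hσ.1 hσ.2
      have h3 : (∫ _, (3/4 : ℝ) ∂μ) = 3/4 := by simp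
      linarith [h2, h3.le]
    have := core_bound hN τ hherm htr hs
    linarith
  · intro σ hσ ht
    exact core_bound hN (tpow σ N) (tpow_herm hσ.1 N)
      (by rw [tpow_trace, ht, one_pow]) (tpow_diag_sum_bound hN hσ ht)
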